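/- Let κ be a weakly compact cardinal and let A ⊆ κ be a set of infinite regular cardinals that is unbounded in κ. Then κ ∈ spec(A) if and only if A is stationary in κ. -/

import Mathlib

universe u

open Cardinal Set

namespace TukeySpec

/-- A subset `S` of a preorder is cofinal if every element has an upper bound in `S`. -/
def IsCofinal {P : Type*} [Preorder P] (S : Set P) : Prop :=
  ∀ p : P, ∃ s ∈ S, p ≤ s

/-- `Q` is a Tukey quotient of `P` (i.e. `P ≥_T Q`): there is a map `P → Q`
sending cofinal sets to cofinal sets. -/
def TukeyQuot (P : Type*) (Q : Type*) [Preorder P] [Preorder Q] : Prop :=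
  ∃ φ : P → Q, ∀ S : Set P, IsCofinal S → IsCofinal (φ '' S)

/-- `P` has calibre `(κ, l, m)`. -/
def Calibre (P : Type u) [Preorder P] (κ l m : Cardinal.{u}) : Prop :=
  ∀ P' : Set P, #P' = κ → ∃ R ⊆ P', #R = l ∧ ∀ B ⊆ R, #B = m → BddAbove B

/-- `P` has calibre `κ` (the simplified form): every `κ`-sized subset has a
`κ`-sized subset which is bounded in `P`. -/
def CalibreSimple (P : Type u) [Preorder P] (κ : Cardinal.{u}) : Prop :=
  ∀ P' : Set P, #P' = κ → ∃ R ⊆ P', #R = κ ∧ BddAbove R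

/-- The Tukey spectrum of a poset: all regular cardinals `κ` with `P ≥_T κ`,
where `κ` carries its usual (ordinal) ordering. -/
def specPoset (P : Type u) [Preorder P] : Set Cardinal.{u} :=
  {κ | κ.IsRegular ∧ TukeyQuot P ↥(Set.Iio κ.ord)}

/-- The product `∏A` of a set of cardinals: all functions on `A` with
`f a < a` (as ordinals). -/
def piSet (A : Set Cardinal.{0}) : Set (↥A → Ordinal.{0}) :=
  {f | ∀ a : ↥A, f a < (a : Cardinal).ord}

/-- A family of members of `∏A` is bounded if it has an upper bound in `(∏A, ≤)`
(pointwise order). -/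
def BddIn (A : Set Cardinal.{0}) (S : Set (↥A → Ordinal.{0})) : Prop :=
  ∃ h ∈ piSet A, ∀ f ∈ S, ∀ a : ↥A, f a ≤ h a

/-- The Tukey spectrum of a set `A` of regular cardinals: all regular `κ` for which
there is a `κ`-sized family `F ⊆ ∏A` all of whose `κ`-sized subfamilies are
unbounded in `(∏A, ≤)`. -/
def spec (A : Set Cardinal.{0}) : Set Cardinal.{0} :=
  {κ | κ.IsRegular ∧ ∃ F ⊆ piSet A, #F = Cardinal.lift.{1} κ ∧
    ∀ F₀ ⊆ F, #F₀ = Cardinal.lift.{1} κ → ¬ BddIn A F₀}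

/-- `cf(∏A/D)`: the least cardinality of a subset of `∏A` which is cofinal
modulo the ultrafilter `D`. -/
noncomputable def cofUlt (A : Set Cardinal.{0}) (D : Ultrafilter ↥A) : Cardinal.{1} :=
  sInf {c : Cardinal.{1} | ∃ S ⊆ piSet A, #S = c ∧
    ∀ f ∈ piSet A, ∃ g ∈ S, {a : ↥A | f a ≤ g a} ∈ D}

/-- `pcf(A)`: the set of all cofinalities `cf(∏A/D)` as `D` ranges over
ultrafilters on `A`. -/
def pcf (A : Set Cardinal.{0}) : Set Cardinal.{0} :=
  {κ | ∃ D : Ultrafilter ↥A, Cardinal.lift.{1} κ = cofUlt A D}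

/-- `ub(F)`: the set of coordinates `a ∈ A` where the family `F` is unbounded. -/
def ub (A : Set Cardinal.{0}) (F : Set (↥A → Ordinal.{0})) : Set ↥A :=
  {a | ∀ β < (a : Cardinal).ord, ∃ f ∈ F, β < f a}

/-- The strong part of the Tukey spectrum: `l ∈ spec*(A)` iff there is an
`l`-sized family `F ⊆ ∏A` such that every `l`-sized subfamily has a set of
unbounded coordinates which is unbounded in `sup A`. -/
def specStarMem (A : Set Cardinal.{0}) (l : Cardinal.{0}) : Prop :=
  l.IsRegular ∧ ∃ F ⊆ piSet A, #F = Cardinal.lift.{1} l ∧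
    ∀ F₀ ⊆ F, #F₀ = Cardinal.lift.{1} l →
      ∀ β < sSup A, ∃ a ∈ ub A F₀, β < (a : Cardinal)

/-- `κ` is a limit point of the set `X` of cardinals. -/
def IsLimitPt (X : Set Cardinal.{0}) (κ : Cardinal.{0}) : Prop :=
  ∀ β < κ, ∃ x ∈ X, β < x ∧ x < κ

/-- `C` is a closed unbounded subset of `κ`. -/
def IsClubIn (C : Set Ordinal.{0}) (κ : Ordinal.{0}) : Prop :=
  C ⊆ Set.Iio κ ∧ (∀ β < κ, ∃ o ∈ C, β < o) ∧
    ∀ β < κ, β ≠ 0 → (∀ γ < β, ∃ o ∈ C, γ < o ∧ o < β) → β ∈ C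

/-- A set `S` of cardinals is stationary in `κ`: it meets every club of `κ`. -/
def StatIn (S : Set Cardinal.{0}) (κ : Cardinal.{0}) : Prop :=
  ∀ C : Set Ordinal.{0}, IsClubIn C κ.ord → ∃ a ∈ S, a.ord ∈ C

/-- `κ` is Mahlo: strongly inaccessible and the regular cardinals below `κ`
are stationary in `κ`. -/
def IsMahlo (κ : Cardinal.{0}) : Prop :=
  κ.IsInaccessible ∧ StatIn {a | a < κ ∧ a.IsRegular} κ

/-- `κ` is weakly compact: strongly inaccessible and `κ → (κ)²₂`. -/
def IsWeaklyCompact (κ : Cardinal.{0}) : Prop :=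
  κ.IsInaccessible ∧
    ∀ c : Ordinal.{0} → Ordinal.{0} → Bool,
      ∃ H ⊆ Set.Iio κ.ord, #H = Cardinal.lift.{1} κ ∧
        ∃ b : Bool, ∀ α ∈ H, ∀ β ∈ H, α < β → c α β = b

/-- `θ` carries a Jónsson algebra: there is `F` from finite subsets of `θ` to `θ`
such that `F` applied to finite subsets of any `θ`-sized `H ⊆ θ` covers `θ`. -/
def CarriesJonsson (θ : Cardinal.{0}) : Prop :=
  ∃ F : Finset Ordinal.{0} → Ordinal.{0},
    (∀ s : Finset Ordinal.{0}, (↑s : Set Ordinal) ⊆ Set.Iio θ.ord → F s < θ.ord) ∧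
    ∀ H ⊆ Set.Iio θ.ord, #H = Cardinal.lift.{1} θ →
      ∀ γ < θ.ord, ∃ s : Finset Ordinal.{0}, (↑s : Set Ordinal) ⊆ H ∧ F s = γ

/-- `cf(∏A/J_bd)`: the least cardinality of a subset of `∏A` cofinal modulo
the ideal of bounded subsets of `A`. -/
noncomputable def cofJbd (A : Set Cardinal.{0}) : Cardinal.{1} :=
  sInf {c : Cardinal.{1} | ∃ S ⊆ piSet A, #S = c ∧
    ∀ f ∈ piSet A, ∃ g ∈ S, ∃ b < sSup A, ∀ a : ↥A, b < (a : Cardinal) → f a ≤ g a}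

/-- `μ` is a limit cardinal. -/
def IsLimitCard (μ : Cardinal.{0}) : Prop :=
  ℵ₀ ≤ μ ∧ ∀ ν < μ, Order.succ ν < μ




/-- helper: subsets of `Iio κ.ord` of full size are unbounded. -/
lemma unbounded_of_mk {κ : Cardinal.{0}} (hκ : ℵ₀ ≤ κ) (S : Set Ordinal.{0})
    (hS : Cardinal.lift.{1} κ ≤ #S) :
    ∀ β < κ.ord, ∃ α ∈ S, β < α := by
  intro β hβ
  by_contra hcon
  push_neg at hcon
  have hsub : S ⊆ Set.Iio (β + 1) := by
    intro x hx
    exact lt_of_le_of_lt (hcon x hx) (lt_add_one β)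
  have h1 : #S ≤ #(Set.Iio (β + 1)) := Cardinal.mk_le_mk_of_subset hsub
  rw [Ordinal.mk_Iio_ordinal] at h1
  have h2 : (β + 1).card < κ := by
    rw [← Cardinal.lt_ord]
    exact (Cardinal.isSuccLimit_ord hκ).succ_lt hβ
  exact absurd (hS.trans h1) (not_le.mpr (Cardinal.lift_lt.mpr h2))

/-- helper: suprema of small sets of ordinals below `c.ord` stay below `c.ord`. -/
lemma csSup_lt_ord {S : Set Ordinal.{0}} {c ν : Cardinal.{0}}
    (hν : ν < c.ord.cof) (hcard : #S ≤ Cardinal.lift.{1} ν)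
    (hlt : ∀ x ∈ S, x < c.ord) : sSup S < c.ord := by
  have hc0 : (0 : Ordinal) < c.ord := by
    rcases eq_or_ne c.ord 0 with h | h
    · rw [h] at hν ⊢
      simp at hν
    · exact pos_iff_ne_zero.mpr h
  rcases S.eq_empty_or_nonempty with rfl | hne
  · simpa using hc0
  obtain ⟨ν', hν'⟩ := Cardinal.mem_range_lift_of_le (show #S ≤ Cardinal.lift.{1} ν from hcard)
  have hν'le : ν' ≤ ν := by
    rw [← Cardinal.lift_le, hν']
    exact hcard
  obtain ⟨e⟩ : Nonempty (ν'.out ≃ ↥S) := by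
    rw [← Cardinal.lift_mk_eq']
    rw [Cardinal.mk_out, hν', Cardinal.lift_id']
  have hbdd : BddAbove (Set.range fun t : ν'.out => ((e t : Ordinal))) := by
    refine ⟨c.ord, ?_⟩
    rintro y ⟨i, rfl⟩
    exact (hlt _ (e i).2).le
  have hsup : (⨆ t : ν'.out, ((e t : Ordinal))) < c.ord := by
    refine Ordinal.iSup_lt_ord ?_ fun i => hlt _ (e i).2
    rw [Cardinal.mk_out]
    exact hν'le.trans_lt hν
  refine lt_of_le_of_lt (csSup_le hne ?_) hsup
  intro x hx
  have hx2 : x = ((e (e.symm ⟨x, hx⟩) : ↥S) : Ordinal) := by simp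
  rw [hx2]
  exact le_ciSup hbdd _


variable {A : Set Cardinal.{0}}

/-- lexicographic `≤` on functions restricted to a subset `s` of coordinates. -/
def lexLe (s : Set ↥A) (u v : ↥A → Ordinal.{0}) : Prop :=
  (∀ a ∈ s, u a = v a) ∨ ∃ a ∈ s, u a < v a ∧ ∀ b ∈ s, b < a → u b = v b

lemma lexLe_total {s : Set ↥A} {u v : ↥A → Ordinal.{0}} (h : ¬ lexLe s u v) :
    lexLe s v u := by
  have hne : {x : Cardinal.{0} | ∃ ha : x ∈ A, u ⟨x, ha⟩ ≠ v ⟨x, ha⟩ ∧ (⟨x, ha⟩ : ↥A) ∈ s}.Nonempty := by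
    by_contra hemp
    rw [Set.not_nonempty_iff_eq_empty] at hemp
    refine h (Or.inl fun a ha => ?_)
    by_contra hne
    exact absurd (Set.eq_empty_iff_forall_notMem.mp hemp a) (by
      push_neg
      exact ⟨a.2, by simpa using hne, by simpa using ha⟩)
  obtain ⟨x, hx, hmin⟩ := Cardinal.lt_wf.has_min _ hne
  obtain ⟨hxA, hxne, hxs⟩ := hx
  have hbelow : ∀ b ∈ s, b < (⟨x, hxA⟩ : ↥A) → u b = v b := by
    intro b hb hlt
    by_contra hbne
    exact hmin (b : Cardinal) ⟨b.2, by simpa using hbne, by simpa using hb⟩ hlt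
  rcases lt_or_gt_of_ne hxne with hlt | hgt
  · exact absurd (Or.inr ⟨⟨x, hxA⟩, hxs, hlt, hbelow⟩) h
  · exact Or.inr ⟨⟨x, hxA⟩, hxs, hgt, fun b hb hlt => (hbelow b hb hlt).symm⟩

lemma lexLe_antisymm {s : Set ↥A} {u v : ↥A → Ordinal.{0}}
    (h1 : lexLe s u v) (h2 : lexLe s v u) : ∀ a ∈ s, u a = v a := by
  rcases h1 with h1 | ⟨a1, ha1, hlt1, hb1⟩
  · exact h1
  rcases h2 with h2 | ⟨a2, ha2, hlt2, hb2⟩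
  · exact fun a ha => (h2 a ha).symm
  exfalso
  rcases lt_trichotomy a1 a2 with h | h | h
  · exact absurd (hb2 a1 ha1 h).symm (ne_of_lt hlt1)
  · subst h; exact absurd hlt2 (not_lt.mpr hlt1.le)
  · exact absurd (hb1 a2 ha2 h) (ne_of_gt hlt2)

lemma lexLe_congr {s : Set ↥A} {u u' v v' : ↥A → Ordinal.{0}}
    (hu : ∀ a ∈ s, u a = u' a) (hv : ∀ a ∈ s, v a = v' a)
    (h : lexLe s u v) : lexLe s u' v' := by
  rcases h with h | ⟨a, ha, hlt, hb⟩
  · exact Or.inl fun a ha => by rw [← hu a ha, ← hv a ha]; exact h a ha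
  · exact Or.inr ⟨a, ha, by rw [← hu a ha, ← hv a ha]; exact hlt,
      fun b hbm hblt => by rw [← hu b hbm, ← hv b hbm]; exact hb b hbm hblt⟩

/-- the coordinates of `A` of ordinal value at most `δ`. -/
def Rset (A : Set Cardinal.{0}) (δ : Ordinal.{0}) : Set ↥A :=
  {a | ((a : Cardinal).ord ≤ δ)}

lemma lexLe_Rset_mono {δ δ' : Ordinal.{0}} (hδ : δ ≤ δ') {u v : ↥A → Ordinal.{0}}
    (h : lexLe (Rset A δ') u v) : lexLe (Rset A δ) u v := by
  have hsub : Rset A δ ⊆ Rset A δ' := fun a ha => le_trans ha hδ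
  rcases h with h | ⟨a, ha, hlt, hb⟩
  · exact Or.inl fun a ha => h a (hsub ha)
  by_cases hmem : (a : Cardinal).ord ≤ δ
  · exact Or.inr ⟨a, hmem, hlt, fun b hbm hblt => hb b (hsub hbm) hblt⟩
  · refine Or.inl fun b hbmem => hb b (hsub hbmem) ?_
    have : ((b : Cardinal).ord) < (a : Cardinal).ord := lt_of_le_of_lt hbmem (not_le.mp hmem)
    exact Subtype.mk_lt_mk.mpr (Cardinal.ord_lt_ord.mp this)


/-- generic recursive enumeration: `enumIn g G ξ` is the least element of `g`
strictly above `enumIn g G ζ` and `G (enumIn g G ζ)` for all `ζ < ξ`. -/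
noncomputable def enumIn (g : Set Ordinal.{0}) (G : Ordinal.{0} → Ordinal.{0}) :
    Ordinal.{0} → Ordinal.{0} :=
  WellFounded.fix Ordinal.lt_wf
    (fun ξ ih => sInf {x | x ∈ g ∧ ∀ ζ, ∀ h : ζ < ξ, ih ζ h < x ∧ G (ih ζ h) < x})

lemma enumIn_def (g : Set Ordinal.{0}) (G : Ordinal.{0} → Ordinal.{0}) (ξ : Ordinal.{0}) :
    enumIn g G ξ =
      sInf {x | x ∈ g ∧ ∀ ζ, ζ < ξ → enumIn g G ζ < x ∧ G (enumIn g G ζ) < x} := by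
  rw [enumIn, WellFounded.fix_eq]

lemma mk_Iio_lt {κ : Cardinal.{0}} (hκ : κ.IsRegular) {ξ : Ordinal.{0}} (hξ : ξ < κ.ord) :
    #(Set.Iio ξ) ≤ Cardinal.lift.{1} ξ.card := by
  rw [Ordinal.mk_Iio_ordinal]

lemma enumIn_spec {κ : Cardinal.{0}} (hκ : κ.IsRegular) {g : Set Ordinal.{0}}
    (hgsub : g ⊆ Set.Iio κ.ord) (hgunb : ∀ β < κ.ord, ∃ x ∈ g, β < x)
    {G : Ordinal.{0} → Ordinal.{0}} (hG : ∀ x < κ.ord, G x < κ.ord) :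
    ∀ ξ < κ.ord, enumIn g G ξ ∈ g ∧
      ∀ ζ, ζ < ξ → enumIn g G ζ < enumIn g G ξ ∧ G (enumIn g G ζ) < enumIn g G ξ := by
  intro ξ
  induction ξ using Ordinal.induction with
  | _ ξ IH =>
  intro hξ
  have hlim := Cardinal.isSuccLimit_ord hκ.aleph0_le
  -- bound for previous values
  set M : Set Ordinal.{0} :=
    (fun ζ : Ordinal => max (enumIn g G ζ + 1) (G (enumIn g G ζ) + 1)) '' (Set.Iio ξ) with hM
  have hMlt : ∀ x ∈ M, x < κ.ord := by
    rintro x ⟨ζ, hζ, rfl⟩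
    have h1 : enumIn g G ζ < κ.ord := hgsub (IH ζ hζ (hζ.trans hξ)).1
    exact max_lt (hlim.succ_lt h1) (hlim.succ_lt (hG _ h1))
  have hMcard : #M ≤ Cardinal.lift.{1} ξ.card :=
    (Cardinal.mk_image_le).trans (le_of_eq (Ordinal.mk_Iio_ordinal ξ))
  have hMsup : sSup M < κ.ord := by
    refine csSup_lt_ord ?_ hMcard hMlt
    rw [hκ.cof_eq]
    exact Cardinal.lt_ord.mp hξ
  obtain ⟨x, hxg, hxgt⟩ := hgunb (sSup M) hMsup
  have hbddM : BddAbove M := ⟨κ.ord, fun y hy => (hMlt y hy).le⟩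
  have hxmem : x ∈ {x | x ∈ g ∧ ∀ ζ, ζ < ξ → enumIn g G ζ < x ∧ G (enumIn g G ζ) < x} := by
    refine ⟨hxg, fun ζ hζ => ?_⟩
    have hmm : max (enumIn g G ζ + 1) (G (enumIn g G ζ) + 1) ∈ M := ⟨ζ, hζ, rfl⟩
    have h1 : max (enumIn g G ζ + 1) (G (enumIn g G ζ) + 1) < x :=
      (le_csSup hbddM hmm).trans_lt hxgt
    constructor
    · exact lt_of_lt_of_le (lt_add_one _) ((le_max_left _ _).trans h1.le)
    · exact lt_of_lt_of_le (lt_add_one _) ((le_max_right _ _).trans h1.le)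
  have hne : {x | x ∈ g ∧ ∀ ζ, ζ < ξ → enumIn g G ζ < x ∧ G (enumIn g G ζ) < x}.Nonempty :=
    ⟨x, hxmem⟩
  rw [enumIn_def]
  have := csInf_mem hne
  exact ⟨this.1, this.2⟩



lemma enumIn_le_self {κ : Cardinal.{0}} (hκ : κ.IsRegular) {g : Set Ordinal.{0}}
    (hgsub : g ⊆ Set.Iio κ.ord) (hgunb : ∀ β < κ.ord, ∃ x ∈ g, β < x)
    {G : Ordinal.{0} → Ordinal.{0}} (hG : ∀ x < κ.ord, G x < κ.ord) :
    ∀ ξ < κ.ord, ξ ≤ enumIn g G ξ := by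
  intro ξ
  induction ξ using Ordinal.induction with
  | _ ξ IH =>
  intro hξ
  by_contra hcon
  push_neg at hcon
  have hζκ : enumIn g G ξ < κ.ord :=
    hgsub (enumIn_spec hκ hgsub hgunb hG ξ hξ).1
  have h1 := IH _ hcon hζκ
  have h2 := ((enumIn_spec hκ hgsub hgunb hG ξ hξ).2 _ hcon).1
  exact absurd (h1.trans_lt h2) (lt_irrefl _)


lemma spec_to_stat {κ : Cardinal.{0}} (hwc : IsWeaklyCompact κ)
    {A : Set Cardinal.{0}} (hA : ∀ a ∈ A, a.IsRegular) (hsub : ∀ a ∈ A, a < κ)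
    (hspec : κ ∈ spec A) : StatIn A κ := by
  classical
  have hreg := hwc.1.isRegular
  obtain ⟨⟨hbig, -, hstrong⟩, hpart⟩ := hwc
  intro C hC
  by_contra hno
  push_neg at hno
  obtain ⟨-, F, hFsub, hFcard, hFunb⟩ := hspec
  have hlim := Cardinal.isSuccLimit_ord hreg.aleph0_le
  -- enumerate the family by ordinals below κ.ord
  have hcardIio : #(Set.Iio κ.ord) = #(↥F) := by
    rw [Ordinal.mk_Iio_ordinal, Cardinal.card_ord, hFcard]
  obtain ⟨bij⟩ := Cardinal.eq.mp hcardIio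
  set F' : Ordinal.{0} → (↥A → Ordinal.{0}) :=
    fun α => if h : α < κ.ord then ((bij ⟨α, h⟩ : ↥F) : ↥A → Ordinal.{0})
      else fun _ => 0 with hF'
  have hF'mem : ∀ {α : Ordinal}, α < κ.ord → F' α ∈ F := by
    intro α h
    simp only [hF', dif_pos h]
    exact (bij ⟨α, h⟩).2
  have hF'pi : ∀ {α : Ordinal}, α < κ.ord → F' α ∈ piSet A :=
    fun h => hFsub (hF'mem h)
  have hF'inj : Set.InjOn F' (Set.Iio κ.ord) := by
    intro x hx y hy hxy
    have e1 : F' x = ((bij ⟨x, hx⟩ : ↥F) : ↥A → Ordinal.{0}) := dif_pos hx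
    have e2 : F' y = ((bij ⟨y, hy⟩ : ↥F) : ↥A → Ordinal.{0}) := dif_pos hy
    rw [e1, e2] at hxy
    have h3 := bij.injective (Subtype.ext hxy)
    simpa using congrArg Subtype.val h3
  -- sup of the club below a coordinate
  set γ : ↥A → Ordinal.{0} := fun a => sSup (C ∩ Set.Iio (a : Cardinal).ord) with hγdef
  have haκ : ∀ a : ↥A, (a : Cardinal).ord < κ.ord :=
    fun a => Cardinal.ord_lt_ord.mpr (hsub a a.2)
  have hapos : ∀ a : ↥A, (0 : Ordinal) < (a : Cardinal).ord := by
    intro a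
    rw [Cardinal.lt_ord]
    simpa using (hA a a.2).pos
  have haord : ∀ a : ↥A, Order.IsSuccLimit ((a : Cardinal).ord) :=
    fun a => Cardinal.isSuccLimit_ord (hA a a.2).aleph0_le
  have hγbdd : ∀ a : ↥A, BddAbove (C ∩ Set.Iio (a : Cardinal).ord) :=
    fun a => ⟨(a : Cardinal).ord, fun x hx => hx.2.le⟩
  have hγlt : ∀ a : ↥A, γ a < (a : Cardinal).ord := by
    intro a
    rcases Set.eq_empty_or_nonempty (C ∩ Set.Iio (a : Cardinal).ord) with hemp | hne
    · rw [hγdef]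
      simp only
      rw [hemp, csSup_empty]
      exact hapos a
    have hle : γ a ≤ (a : Cardinal).ord := csSup_le hne fun x hx => hx.2.le
    rcases lt_or_eq_of_le hle with h | h
    · exact h
    exfalso
    have hmem : (a : Cardinal).ord ∈ C := by
      refine hC.2.2 _ (haκ a) (hapos a).ne' ?_
      intro β hβ
      obtain ⟨o, ho, hβo⟩ := exists_lt_of_lt_csSup hne (h ▸ hβ)
      exact ⟨o, ho.1, hβo, ho.2⟩
    exact hno a a.2 hmem
  have hγge : ∀ a : ↥A, ∀ c' ∈ C, c' < (a : Cardinal).ord → c' ≤ γ a :=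
    fun a c' hc' hlt => le_csSup (hγbdd a) ⟨hc', hlt⟩
  -- enumeration of the club
  set eC : Ordinal.{0} → Ordinal.{0} := enumIn C (fun _ => 0) with heCdef
  have hzero : ∀ x < κ.ord, (fun _ : Ordinal => (0 : Ordinal)) x < κ.ord :=
    fun x hx => hlim.pos
  have heC := enumIn_spec hreg hC.1 hC.2.1 hzero
  have heCle := enumIn_le_self hreg hC.1 hC.2.1 hzero
  have heCmem : ∀ {x : Ordinal}, x < κ.ord → eC x ∈ C := fun hx => (heC _ hx).1
  have heClt : ∀ {x : Ordinal}, x < κ.ord → eC x < κ.ord := fun hx => hC.1 (heCmem hx)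
  have heCmono : ∀ {x y : Ordinal}, x < y → y < κ.ord → eC x < eC y :=
    fun hxy hy => ((heC _ hy).2 _ hxy).1
  have heCmono' : ∀ {x y : Ordinal}, x ≤ y → y < κ.ord → eC x ≤ eC y := by
    intro x y hxy hy
    rcases eq_or_lt_of_le hxy with rfl | h
    · exact le_rfl
    · exact (heCmono h hy).le
  -- the coloring
  set col : Ordinal.{0} → Ordinal.{0} → Bool :=
    fun α β => decide (lexLe (Rset A (eC α)) (F' α) (F' β)) with hcol
  obtain ⟨H, hHsub, hHcard, b, hb⟩ := hpart col
  have hHunb := unbounded_of_mk hreg.aleph0_le H (le_of_eq hHcard.symm)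
  have hdir : ∀ α ∈ H, ∀ β ∈ H, α < β →
      lexLe (Rset A (eC α)) (cond b (F' α) (F' β)) (cond b (F' β) (F' α)) := by
    intro α hα β hβ hlt
    have hcb := hb α hα β hβ hlt
    cases b
    · have : ¬ lexLe (Rset A (eC α)) (F' α) (F' β) := by
        intro hcon
        rw [hcol] at hcb
        simp only [decide_eq_false_iff_not] at hcb
        exact hcb hcon
      simpa using lexLe_total this
    · rw [hcol] at hcb
      simp only [decide_eq_true_eq] at hcb
      simpa using hcb
  -- the stabilization thresholds
  have hBex : ∀ α : Ordinal, ∃ Bα : Ordinal, α ∈ H → (Bα < κ.ord ∧ α < Bα ∧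
      ∀ η ∈ H, ∀ η' ∈ H, Bα ≤ η → Bα ≤ η' → ∀ a : ↥A, (a : Cardinal).ord ≤ eC α →
        F' η a = F' η' a) := by
    intro α
    by_cases hα : α ∈ H
    swap
    · exact ⟨0, fun h => absurd h hα⟩
    have hακ : α < κ.ord := hHsub hα
    set δ : Ordinal.{0} := eC α with hδdef
    set proj : (↥A → Ordinal.{0}) → (↥A → Ordinal.{0}) :=
      fun u a => if (a : Cardinal).ord ≤ δ then u a else 0 with hprojdef
    set W : Set (↥A → Ordinal.{0}) := (fun η => proj (F' η)) '' {η | η ∈ H ∧ α ≤ η} with hWdef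
    have hδκ : δ < κ.ord := heClt hακ
    have hν : (δ + 1).card < κ := Cardinal.lt_ord.mp (hlim.succ_lt hδκ)
    have hWval : ∀ u ∈ W, ∀ a : ↥A, ((a : Cardinal).ord ≤ δ → u a ≤ δ) ∧
        (¬ (a : Cardinal).ord ≤ δ → u a = 0) := by
      rintro u ⟨η, hη, rfl⟩ a
      constructor
      · intro ha
        show proj (F' η) a ≤ δ
        have h6 : proj (F' η) a = F' η a := if_pos ha
        rw [h6]
        exact le_trans (hF'pi (hHsub hη.1) a).le ha
      · intro ha
        show proj (F' η) a = 0
        exact if_neg ha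
    have hWinj : Function.Injective (fun w : ↥W =>
        (fun a : ↥(Rset A δ) =>
          (⟨w.1 a.1, ((hWval w.1 w.2 a.1).1 a.2)⟩ : ↥(Set.Iic δ)))) := by
      intro w w' hww
      refine Subtype.ext (funext fun a => ?_)
      by_cases ha : (a : Cardinal).ord ≤ δ
      · have h7 := congrFun hww ⟨a, ha⟩
        exact congrArg Subtype.val h7
      · rw [(hWval w.1 w.2 a).2 ha, (hWval w'.1 w'.2 a).2 ha]
    have hιcard : #(↥(Set.Iic δ)) ≤ Cardinal.lift.{1} ((δ + 1).card) := by
      have h8 : Set.Iic δ ⊆ Set.Iio (δ + 1) := fun x hx => lt_of_le_of_lt hx (lt_add_one δ)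
      have h8' := Cardinal.mk_le_mk_of_subset h8
      rwa [Ordinal.mk_Iio_ordinal] at h8'
    have hRcard : #(↥(Rset A δ)) ≤ Cardinal.lift.{1} ((δ + 1).card) := by
      have hinj2 : Function.Injective (fun a : ↥(Rset A δ) =>
          (⟨((a : ↥A) : Cardinal).ord, lt_of_le_of_lt a.2 (lt_add_one δ)⟩ :
            ↥(Set.Iio (δ + 1)))) := by
        intro x y hxy
        have h9 : ((x : ↥A) : Cardinal).ord = ((y : ↥A) : Cardinal).ord :=
          congrArg Subtype.val hxy
        exact Subtype.ext (Subtype.ext (Cardinal.ord_injective h9))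
      have h9' := Cardinal.mk_le_of_injective hinj2
      rwa [Ordinal.mk_Iio_ordinal] at h9'
    set m : Cardinal.{0} := max ((δ + 1).card) ℵ₀ with hm
    have hmκ : m < κ := max_lt hν hbig
    have hmpos : Cardinal.lift.{1} m ≠ 0 := by
      rw [Ne, Cardinal.lift_eq_zero]
      exact (lt_of_lt_of_le Cardinal.aleph0_pos (le_max_right _ _)).ne'
    have hWcard : #(↥W) ≤ Cardinal.lift.{1} (2 ^ m) := by
      have h10 : #(↥W) ≤ #(↥(Rset A δ) → ↥(Set.Iic δ)) := Cardinal.mk_le_of_injective hWinj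
      have h11 : #(↥(Rset A δ) → ↥(Set.Iic δ)) = #(↥(Set.Iic δ)) ^ #(↥(Rset A δ)) :=
        (Cardinal.power_def _ _).symm
      have hbase : #(↥(Set.Iic δ)) ≤ Cardinal.lift.{1} m :=
        hιcard.trans (Cardinal.lift_le.mpr (le_max_left _ _))
      have hexp : #(↥(Rset A δ)) ≤ Cardinal.lift.{1} m :=
        hRcard.trans (Cardinal.lift_le.mpr (le_max_left _ _))
      have h12 : #(↥(Set.Iic δ)) ^ #(↥(Rset A δ)) ≤
          (Cardinal.lift.{1} m) ^ (Cardinal.lift.{1} m) :=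
        le_trans (Cardinal.power_le_power_right hbase)
          (Cardinal.power_le_power_left hmpos hexp)
      have h13 : (Cardinal.lift.{1} m) ^ (Cardinal.lift.{1} m) = Cardinal.lift.{1} (m ^ m) :=
        (Cardinal.lift_power _ _).symm
      have h14 : m ^ m = 2 ^ m := Cardinal.power_self_eq (le_max_right _ _)
      calc #(↥W) ≤ #(↥(Rset A δ) → ↥(Set.Iic δ)) := h10
        _ = #(↥(Set.Iic δ)) ^ #(↥(Rset A δ)) := h11
        _ ≤ (Cardinal.lift.{1} m) ^ (Cardinal.lift.{1} m) := h12
        _ = Cardinal.lift.{1} (m ^ m) := h13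
        _ = Cardinal.lift.{1} (2 ^ m) := by rw [h14]
    have h2mκ : 2 ^ m < κ := hstrong hmκ
    have hmemW : ∀ w : ↥W, ∃ η, (η ∈ H ∧ α ≤ η) ∧
        (fun η => proj (F' η)) η = (w : ↥A → Ordinal.{0}) := fun w => w.2
    choose idx hidx using hmemW
    set B₀ : Set Ordinal.{0} := Set.range idx with hB₀
    have hB₀card : #(↥B₀) ≤ Cardinal.lift.{1} (2 ^ m) := (Cardinal.mk_range_le).trans hWcard
    have hB₀lt : ∀ x ∈ B₀, x < κ.ord := by
      rintro x ⟨w, rfl⟩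
      exact hHsub (hidx w).1.1
    have hB₀sup : sSup B₀ < κ.ord :=
      csSup_lt_ord (by rw [hreg.cof_eq]; exact h2mκ) hB₀card hB₀lt
    refine ⟨max (α + 1) (sSup B₀ + 1), fun _ => ⟨?_, ?_, ?_⟩⟩
    · exact max_lt (hlim.succ_lt hακ) (hlim.succ_lt hB₀sup)
    · exact lt_of_lt_of_le (lt_add_one α) (le_max_left _ _)
    have hcore : ∀ η ∈ H, ∀ η' ∈ H, max (α + 1) (sSup B₀ + 1) ≤ η →
        max (α + 1) (sSup B₀ + 1) ≤ η' → η < η' →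
        ∀ a : ↥A, (a : Cardinal).ord ≤ δ → F' η a = F' η' a := by
      intro η hη η' hη' hBη hBη' hlt a ha
      have hαη : α < η := lt_of_lt_of_le (lt_of_lt_of_le (lt_add_one α) (le_max_left _ _)) hBη
      have hαη' : α < η' := lt_of_lt_of_le (lt_of_lt_of_le (lt_add_one α) (le_max_left _ _)) hBη'
      have hu : proj (F' η') ∈ W := ⟨η', ⟨hη', hαη'.le⟩, rfl⟩
      set w : ↥W := ⟨proj (F' η'), hu⟩ with hw
      have hidxw := hidx w
      have hηuH : idx w ∈ H := hidxw.1.1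
      have hαηu : α ≤ idx w := hidxw.1.2
      have hηuκ : idx w < κ.ord := hHsub hηuH
      have hηulow : idx w < η := by
        have h15 : idx w ≤ sSup B₀ := le_csSup ⟨κ.ord, fun x hx => (hB₀lt x hx).le⟩ ⟨w, rfl⟩
        exact lt_of_lt_of_le (lt_of_le_of_lt h15 (lt_add_one _)) ((le_max_right _ _).trans hBη)
      have hP1 := hdir η hη η' hη' hlt
      have hP1' := lexLe_Rset_mono (heCmono' hαη.le (hHsub hη)) hP1
      have hP2 := hdir (idx w) hηuH η hη hηulow
      have hP2' := lexLe_Rset_mono (heCmono' hαηu hηuκ) hP2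
      have heqs : ∀ a' : ↥A, a' ∈ Rset A δ → F' (idx w) a' = F' η' a' := by
        intro a' ha'
        have h16 : proj (F' (idx w)) a' = proj (F' η') a' := congrFun hidxw.2 a'
        have e1 : proj (F' (idx w)) a' = F' (idx w) a' := if_pos ha'
        have e2 : proj (F' η') a' = F' η' a' := if_pos ha'
        rw [e1, e2] at h16
        exact h16
      cases b
      · simp only [cond] at hP1' hP2'
        have hP2'' := lexLe_congr (fun a' _ => rfl) heqs hP2'
        exact lexLe_antisymm hP2'' hP1' a ha
      · simp only [cond] at hP1' hP2'
        have hP2'' := lexLe_congr heqs (fun a' _ => rfl) hP2'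
        exact lexLe_antisymm hP1' hP2'' a ha
    intro η hη η' hη' h1 h2 a ha
    rcases lt_trichotomy η η' with h | h | h
    · exact hcore η hη η' hη' h1 h2 h a ha
    · rw [h]
    · exact (hcore η' hη' η hη h2 h1 h a ha).symm

  choose Bf hBf using hBex
  -- thinning-out recursion inside H
  set G0 : Ordinal.{0} → Ordinal.{0} := fun x => if x ∈ H then Bf x else 0 with hG0def
  have hG0 : ∀ x < κ.ord, G0 x < κ.ord := by
    intro x hx
    rw [hG0def]
    by_cases h : x ∈ H
    · simpa [h] using (hBf x h).1
    · simpa [h] using hlim.pos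
  set N : Ordinal.{0} → Ordinal.{0} := enumIn {x | x ∈ H} G0 with hNdef
  have hHsub' : {x | x ∈ H} ⊆ Set.Iio κ.ord := fun x hx => hHsub hx
  have hN := enumIn_spec hreg hHsub' hHunb hG0
  have hNle := enumIn_le_self hreg hHsub' hHunb hG0
  have hNH : ∀ {ξ : Ordinal}, ξ < κ.ord → N ξ ∈ H := fun hξ => (hN _ hξ).1
  have hNκ : ∀ {ξ : Ordinal}, ξ < κ.ord → N ξ < κ.ord := fun hξ => hHsub (hNH hξ)
  have hNmono : ∀ {ζ ξ : Ordinal}, ζ < ξ → ξ < κ.ord → N ζ < N ξ :=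
    fun hζξ hξ => ((hN _ hξ).2 _ hζξ).1
  have hNBf : ∀ {ζ ξ : Ordinal}, ζ < ξ → ξ < κ.ord → Bf (N ζ) < N ξ := by
    intro ζ ξ hζξ hξ
    have h4 := ((hN _ hξ).2 _ hζξ).2
    simp only [hG0def] at h4
    rwa [if_pos (hNH (hζξ.trans hξ))] at h4
  set T : Set Ordinal.{0} := N '' (Set.Iio κ.ord) with hT
  have hTH : ∀ {j : Ordinal}, j ∈ T → j ∈ H := by
    rintro j ⟨ξ, hξ, rfl⟩
    exact hNH hξ
  have hTκ : ∀ {j : Ordinal}, j ∈ T → j < κ.ord := fun hj => hHsub (hTH hj)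
  -- first and second elements of T above a coordinate
  have hTabove : ∀ a : ↥A, {j | j ∈ T ∧ (a : Cardinal).ord ≤ eC j}.Nonempty := by
    intro a
    refine ⟨N ((a : Cardinal).ord), ⟨⟨_, haκ a, rfl⟩, ?_⟩⟩
    exact le_trans (hNle _ (haκ a)) (heCle _ (hNκ (haκ a)))
  set j1 : ↥A → Ordinal.{0} := fun a => sInf {j | j ∈ T ∧ (a : Cardinal).ord ≤ eC j} with hj1def
  have hj1 : ∀ a : ↥A, j1 a ∈ T ∧ (a : Cardinal).ord ≤ eC (j1 a) := fun a => csInf_mem (hTabove a)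
  have hj2ne : ∀ a : ↥A, {j | j ∈ T ∧ j1 a < j}.Nonempty := by
    intro a
    obtain ⟨ξ, hξ, hNξ⟩ := (hj1 a).1
    refine ⟨N (ξ + 1), ⟨⟨_, hlim.succ_lt hξ, rfl⟩, ?_⟩⟩
    rw [← hNξ]
    exact hNmono (lt_add_one ξ) (hlim.succ_lt hξ)
  set j2 : ↥A → Ordinal.{0} := fun a => sInf {j | j ∈ T ∧ j1 a < j} with hj2def
  have hj2 : ∀ a : ↥A, j2 a ∈ T ∧ j1 a < j2 a := fun a => csInf_mem (hj2ne a)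
  set Ia : ↥A → Set Ordinal.{0} :=
    fun a => {j | j ∈ T ∧ (eC j ≤ γ a ∨ j = j1 a ∨ j = j2 a)} with hIadef
  set hfun : ↥A → Ordinal.{0} := fun a => sSup ((fun j => F' j a) '' Ia a) with hfundef
  have hIabdd : ∀ a : ↥A, BddAbove ((fun j => F' j a) '' Ia a) := by
    intro a
    refine ⟨(a : Cardinal).ord, ?_⟩
    rintro y ⟨j, hj, rfl⟩
    exact (hF'pi (hTκ hj.1) a).le
  -- splitting of T relative to a coordinate
  have hsplit : ∀ a : ↥A, ∀ j ∈ T, ¬ eC j ≤ γ a → (a : Cardinal).ord ≤ eC j := by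
    intro a j hj hnle
    rcases lt_trichotomy (eC j) ((a : Cardinal).ord) with hlt | heq | hgt
    · exact absurd (hγge a _ (heCmem (hTκ hj)) hlt) hnle
    · exact absurd (heq ▸ heCmem (hTκ hj)) (hno a a.2)
    · exact hgt.le
  -- order reflection within T
  have hreflect : ∀ {x y : Ordinal}, ∀ hx : x ∈ T, ∀ hy : y ∈ T, x < y →
      ∀ {ξ ζ : Ordinal}, ξ < κ.ord → ζ < κ.ord → N ξ = x → N ζ = y → ξ < ζ := by
    intro x y hx hy hxy ξ ζ hξ hζ hNξ hNζ
    by_contra hcon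
    push_neg at hcon
    rcases eq_or_lt_of_le hcon with rfl | h
    · rw [hNξ] at hNζ
      exact absurd (hNζ ▸ hxy) (lt_irrefl _)
    · have := hNmono h hξ
      rw [hNξ, hNζ] at this
      exact absurd (hxy.trans this) (lt_irrefl _)
  -- agreement of the tail above j2
  have hagree : ∀ a : ↥A, ∀ j ∈ T, j2 a < j → F' j a = F' (j2 a) a := by
    intro a j hjT hgt
    obtain ⟨ξ, hξ, hNξ⟩ := hjT
    obtain ⟨ξ1, hξ1, hNξ1⟩ := (hj1 a).1
    obtain ⟨ξ2, hξ2, hNξ2⟩ := (hj2 a).1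
    have h12 : ξ1 < ξ2 := hreflect (hj1 a).1 (hj2 a).1 (hj2 a).2 hξ1 hξ2 hNξ1 hNξ2
    have h2j : ξ2 < ξ := hreflect (hj2 a).1 ⟨ξ, hξ, hNξ⟩ hgt hξ2 hξ hNξ2 hNξ
    have hb1 : Bf (j1 a) ≤ j := by
      rw [← hNξ, ← hNξ1]
      exact (hNBf (h12.trans h2j) hξ).le
    have hb2 : Bf (j1 a) ≤ j2 a := by
      rw [← hNξ2, ← hNξ1]
      exact (hNBf h12 hξ2).le
    exact (hBf (j1 a) (hTH (hj1 a).1)).2.2 j (hTH ⟨ξ, hξ, hNξ⟩) (j2 a) (hTH (hj2 a).1)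
      hb1 hb2 a (hj1 a).2
  -- the function hfun bounds the subfamily
  have hboundall : ∀ g ∈ F' '' T, ∀ a : ↥A, g a ≤ hfun a := by
    rintro g ⟨j, hjT, rfl⟩ a
    by_cases h1 : eC j ≤ γ a
    · exact le_csSup (hIabdd a) ⟨j, ⟨hjT, Or.inl h1⟩, rfl⟩
    have hge := hsplit a j hjT h1
    have hj1le : j1 a ≤ j := csInf_le (OrderBot.bddBelow _) ⟨hjT, hge⟩
    rcases eq_or_lt_of_le hj1le with heq | hlt
    · exact le_csSup (hIabdd a) ⟨j, ⟨hjT, Or.inr (Or.inl heq.symm)⟩, rfl⟩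
    have hj2le : j2 a ≤ j := csInf_le (OrderBot.bddBelow _) ⟨hjT, hlt⟩
    rcases eq_or_lt_of_le hj2le with heq | hlt2
    · exact le_csSup (hIabdd a) ⟨j, ⟨hjT, Or.inr (Or.inr heq.symm)⟩, rfl⟩
    rw [hagree a j hjT hlt2]
    exact le_csSup (hIabdd a) ⟨j2 a, ⟨(hj2 a).1, Or.inr (Or.inr rfl)⟩, rfl⟩
  -- hfun is a member of the product
  have heCinjT : ∀ {x y : Ordinal}, x ∈ T → y ∈ T → eC x = eC y → x = y := by
    intro x y hx hy hxy
    rcases lt_trichotomy x y with h | h | h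
    · exact absurd (hxy ▸ heCmono h (hTκ hy)) (lt_irrefl _)
    · exact h
    · exact absurd (hxy ▸ heCmono h (hTκ hx)) (lt_irrefl _)
  have hpifun : hfun ∈ piSet A := by
    intro a
    have hν1 : (γ a + 1).card < a := by
      rw [← Cardinal.lt_ord]
      exact (haord a).succ_lt (hγlt a)
    have hν2 : ((γ a + 1).card + 2) < (a : Cardinal) := by
      refine Cardinal.add_lt_of_lt (hA a a.2).aleph0_le hν1 ?_
      exact lt_of_lt_of_le (Cardinal.lt_aleph0.mpr ⟨2, by norm_num⟩) (hA a a.2).aleph0_le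
    refine csSup_lt_ord (ν := (γ a + 1).card + 2) ?_ ?_ ?_
    · rw [(hA a a.2).cof_eq]
      exact hν2
    · have hsubIa : Ia a ⊆ {j | j ∈ T ∧ eC j ≤ γ a} ∪ {j1 a, j2 a} := by
        rintro j ⟨hjT, hj⟩
        rcases hj with h | h | h
        · exact Or.inl ⟨hjT, h⟩
        · exact Or.inr (Or.inl h)
        · exact Or.inr (Or.inr h)
      have hc1 : #({j | j ∈ T ∧ eC j ≤ γ a} : Set Ordinal) ≤
          Cardinal.lift.{1} ((γ a + 1).card) := by
        have hinj : Function.Injective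
            (fun j : ↥{j | j ∈ T ∧ eC j ≤ γ a} =>
              (⟨eC j, lt_of_le_of_lt j.2.2 (lt_add_one _)⟩ : ↥(Set.Iio (γ a + 1)))) := by
          intro x y hxy
          have h5 : eC (x : Ordinal) = eC (y : Ordinal) := congrArg Subtype.val hxy
          exact Subtype.ext (heCinjT x.2.1 y.2.1 h5)
        have := Cardinal.mk_le_of_injective hinj
        rwa [Ordinal.mk_Iio_ordinal] at this
      have hc2 : #({j1 a, j2 a} : Set Ordinal) ≤ 2 := by
        refine (Cardinal.mk_insert_le).trans ?_
        rw [Cardinal.mk_singleton]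
        norm_num
      calc #((fun j => F' j a) '' Ia a) ≤ #(Ia a) := Cardinal.mk_image_le
        _ ≤ #({j | j ∈ T ∧ eC j ≤ γ a} ∪ {j1 a, j2 a} : Set Ordinal) :=
          Cardinal.mk_le_mk_of_subset hsubIa
        _ ≤ #({j | j ∈ T ∧ eC j ≤ γ a} : Set Ordinal) + #({j1 a, j2 a} : Set Ordinal) :=
          Cardinal.mk_union_le _ _
        _ ≤ Cardinal.lift.{1} ((γ a + 1).card) + 2 := add_le_add hc1 hc2
        _ = Cardinal.lift.{1} ((γ a + 1).card + 2) := by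
          rw [Cardinal.lift_add]
          norm_num
    · rintro x ⟨j, hj, rfl⟩
      exact hF'pi (hTκ hj.1) a
  -- the final subfamily
  have hNinj : Set.InjOn N (Set.Iio κ.ord) := by
    intro x hx y hy hxy
    rcases lt_trichotomy x y with h | h | h
    · exact absurd (hxy ▸ hNmono h hy) (lt_irrefl _)
    · exact h
    · exact absurd (hxy ▸ hNmono h hx) (lt_irrefl _)
  have hcomp : Set.InjOn (fun ξ => F' (N ξ)) (Set.Iio κ.ord) := by
    intro x hx y hy hxy
    exact hNinj hx hy (hF'inj (hNκ hx) (hNκ hy) hxy)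
  have hF₀sub : F' '' T ⊆ F := by
    rintro g ⟨j, hjT, rfl⟩
    exact hF'mem (hTκ hjT)
  have hF₀card : #(F' '' T) = Cardinal.lift.{1} κ := by
    rw [hT, Set.image_image]
    rw [Cardinal.mk_image_eq_of_injOn _ _ hcomp, Ordinal.mk_Iio_ordinal, Cardinal.card_ord]
  exact hFunb (F' '' T) hF₀sub hF₀card ⟨hfun, hpifun, hboundall⟩


lemma stat_to_spec {κ : Cardinal.{0}} (hκ : κ.IsRegular) (hbig : ℵ₀ < κ)
    {A : Set Cardinal.{0}} (hA : ∀ a ∈ A, a.IsRegular)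
    (hunb : ∀ β < κ, ∃ a ∈ A, β < a) (hstat : StatIn A κ) : κ ∈ spec A := by
  refine ⟨hκ, ?_⟩
  classical
  set fFam : Ordinal.{0} → (↥A → Ordinal.{0}) :=
    fun α a => if α < (a : Cardinal).ord then α else 0 with hfFam
  have hapos : ∀ a : ↥A, (0 : Ordinal) < (a : Cardinal).ord := by
    intro a
    rw [Cardinal.lt_ord]
    simpa using (hA a a.2).pos
  have hpi : ∀ α, fFam α ∈ piSet A := by
    intro α a
    by_cases h : α < (a : Cardinal).ord
    · simpa [hfFam, h] using h
    · simpa [hfFam, h] using hapos a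
  have hidx : ∀ {β : Ordinal}, β < κ.ord → ∃ a : ↥A, β < (a : Cardinal).ord := by
    intro β hβ
    obtain ⟨a, ha, hlt⟩ := hunb β.card (Cardinal.lt_ord.mp hβ)
    exact ⟨⟨a, ha⟩, Cardinal.lt_ord.mpr hlt⟩
  have hinj : Set.InjOn fFam (Set.Iio κ.ord) := by
    intro α hα β hβ h
    by_contra hne
    wlog hlt : α < β generalizing α β
    · exact this hβ hα h.symm (Ne.symm hne) (lt_of_le_of_ne (not_lt.mp hlt) (Ne.symm hne))
    obtain ⟨a, ha⟩ := hidx hβ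
    have := congrFun h a
    rw [hfFam] at this
    simp only [if_pos (hlt.trans ha), if_pos ha] at this
    exact hne this
  refine ⟨fFam '' (Set.Iio κ.ord), ?_, ?_, ?_⟩
  · rintro _ ⟨α, _, rfl⟩
    exact hpi α
  · rw [Cardinal.mk_image_eq_of_injOn _ _ hinj, Ordinal.mk_Iio_ordinal, Cardinal.card_ord]
  intro F₀ hF₀sub hF₀card hbdd
  obtain ⟨h, hpiH, hbound⟩ := hbdd
  set S : Set Ordinal.{0} := {α | α < κ.ord ∧ fFam α ∈ F₀} with hS
  have himg : fFam '' S = F₀ := by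
    apply Set.Subset.antisymm
    · rintro _ ⟨α, hα, rfl⟩
      exact hα.2
    · intro g hg
      obtain ⟨α, hα, rfl⟩ := hF₀sub hg
      exact ⟨α, ⟨hα, hg⟩, rfl⟩
  have hScard : Cardinal.lift.{1} κ ≤ #S := by
    rw [← hF₀card, ← himg, Cardinal.mk_image_eq_of_injOn _ _ (hinj.mono fun x hx => hx.1)]
  have hSunb := unbounded_of_mk hκ.aleph0_le S hScard
  -- the club of positive limit points of `S`
  set C₀ : Set Ordinal.{0} := {β | β < κ.ord ∧ β ≠ 0 ∧ sSup {x | x ∈ S ∧ x < β} = β} with hC₀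
  have hlim := Cardinal.isSuccLimit_ord hκ.aleph0_le
  have hnext : ∀ β < κ.ord, sInf {y | y ∈ S ∧ β < y} ∈ S ∧ β < sInf {y | y ∈ S ∧ β < y} := by
    intro β hβ
    obtain ⟨x, hx1, hx2⟩ := hSunb β hβ
    have := csInf_mem (⟨x, hx1, hx2⟩ : {y | y ∈ S ∧ β < y}.Nonempty)
    exact ⟨this.1, this.2⟩
  have hclub : IsClubIn C₀ κ.ord := by
    refine ⟨fun β hβ => hβ.1, ?_, ?_⟩
    · -- unbounded
      intro β hβ
      set r : ℕ → Ordinal.{0} := fun n => Nat.rec (β + 1)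
        (fun _ p => sInf {y | y ∈ S ∧ p < y} + 1) n with hr
      have hrlt : ∀ n, r n < κ.ord := by
        intro n
        induction n with
        | zero => exact hlim.succ_lt hβ
        | succ n ih =>
          have h1 := hnext (r n) ih
          have h2 : sInf {y | y ∈ S ∧ r n < y} < κ.ord := h1.1.1
          exact hlim.succ_lt h2
      have hrmono : ∀ n, r n < r (n + 1) := by
        intro n
        have h1 := hnext (r n) (hrlt n)
        exact h1.2.trans (lt_add_one _)
      have hbddr : BddAbove (Set.range r) := ⟨κ.ord, by rintro y ⟨n, rfl⟩; exact (hrlt n).le⟩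
      set o := ⨆ n, r n with ho
      have hro : ∀ n, r n ≤ o := fun n => le_ciSup hbddr n
      have hoκ : o < κ.ord := by
        refine Ordinal.iSup_lt_ord ?_ hrlt
        rw [Cardinal.mk_nat, hκ.cof_eq]
        exact hbig
      have h0o : (0 : Ordinal) < o :=
        lt_of_lt_of_le (lt_of_le_of_lt (zero_le (a := β)) (lt_add_one β)) (hro 0)
      refine ⟨o, ⟨hoκ, h0o.ne', ?_⟩, lt_of_lt_of_le (lt_add_one β) (hro 0)⟩
      have hsn : ∀ n, sInf {y | y ∈ S ∧ r n < y} ∈ {x | x ∈ S ∧ x < o} ∧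
          r n < sInf {y | y ∈ S ∧ r n < y} := by
        intro n
        have h1 := hnext (r n) (hrlt n)
        refine ⟨⟨h1.1, ?_⟩, h1.2⟩
        exact lt_of_lt_of_le (lt_add_one _) (hro (n + 1))
      have hbdd2 : BddAbove {x | x ∈ S ∧ x < o} := ⟨o, fun x hx => hx.2.le⟩
      apply le_antisymm
      · exact csSup_le ⟨_, (hsn 0).1⟩ fun x hx => hx.2.le
      · rw [ho]
        refine ciSup_le fun n => ?_
        exact ((hsn n).2.le).trans (le_csSup hbdd2 (hsn n).1)
    · -- closed
      intro β hβ hβ0 hlimpt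
      have h0 : (0 : Ordinal) < β := pos_iff_ne_zero.mpr hβ0
      obtain ⟨o₀, ho₀, h0o₀, ho₀β⟩ := hlimpt 0 h0
      have hone : ∀ o' ∈ C₀, {x | x ∈ S ∧ x < o'}.Nonempty := by
        intro o' ho'
        rcases Set.eq_empty_or_nonempty {x | x ∈ S ∧ x < o'} with hemp | hne
        · exfalso
          have := ho'.2.2
          rw [hemp, csSup_empty] at this
          exact ho'.2.1 this.symm
        · exact hne
      have hneβ : {x | x ∈ S ∧ x < β}.Nonempty := by
        obtain ⟨x, hx⟩ := hone o₀ ho₀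
        exact ⟨x, hx.1, hx.2.trans ho₀β⟩
      refine ⟨hβ, hβ0, le_antisymm (csSup_le hneβ fun x hx => hx.2.le) ?_⟩
      refine le_of_forall_lt fun γ hγ => ?_
      obtain ⟨o', ho', hγo', ho'β⟩ := hlimpt γ hγ
      obtain ⟨x, hx, hγx⟩ := exists_lt_of_lt_csSup (hone o' ho') (by rw [ho'.2.2]; exact hγo')
      have hxβ : x ∈ {x | x ∈ S ∧ x < β} := ⟨hx.1, hx.2.trans ho'β⟩
      exact lt_of_lt_of_le hγx (le_csSup ⟨β, fun y hy => hy.2.le⟩ hxβ)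
  obtain ⟨a, haA, haC⟩ := hstat C₀ hclub
  set aa : ↥A := ⟨a, haA⟩
  have hsup : sSup {x | x ∈ S ∧ x < a.ord} = a.ord := haC.2.2
  have hne : {x | x ∈ S ∧ x < a.ord}.Nonempty := by
    rcases Set.eq_empty_or_nonempty {x | x ∈ S ∧ x < a.ord} with hemp | hne
    · rw [hemp, csSup_empty] at hsup
      exact absurd hsup.symm haC.2.1
    · exact hne
  have hle : a.ord ≤ h aa := by
    rw [← hsup]
    refine csSup_le hne fun x hx => ?_
    have h2 := hbound (fFam x) hx.1.2 aa
    have heq : fFam x aa = x := by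
      simp only [hfFam]
      exact if_pos hx.2
    rwa [heq] at h2
  exact absurd (hpiH aa) (not_lt.mpr hle)


/-- If `κ` is weakly compact and `A ⊆ κ` is an unbounded set of
infinite regular cardinals, then `κ ∈ spec(A)` iff `A` is stationary in `κ`. -/
theorem statement13 (κ : Cardinal.{0}) (hwc : IsWeaklyCompact κ)
    (A : Set Cardinal.{0}) (hA : ∀ a ∈ A, a.IsRegular) (hsub : ∀ a ∈ A, a < κ)
    (hunb : ∀ β < κ, ∃ a ∈ A, β < a) :
    κ ∈ spec A ↔ StatIn A κ := by
  constructor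
  · intro hspec
    exact spec_to_stat hwc hA hsub hspec
  · intro hstat
    exact stat_to_spec hwc.1.isRegular hwc.1.aleph0_lt hA hunb hstat

end TukeySpec
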